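/- Every subgroup H of Sym(Ω) is the automorphism group of some second-order structure on Ω whose quantifiers are of type (2,2,…,2) (i.e., relations on 𝒫(Ω²)). -/

import Mathlib

open Set

private def img (k : Equiv.Perm Ω) (R : Set (Ω × Ω)) : Set (Ω × Ω) :=
  (fun p : Ω × Ω => (k p.1, k p.2)) '' R

private lemma img_comp (Ω : Type) (g k : Equiv.Perm Ω) (R : Set (Ω × Ω)) :
    img g (img k R) = img (g * k) R := by
  simp [img, Set.image_image, Equiv.Perm.mul_apply]

private lemma img_one (Ω : Type) (R : Set (Ω × Ω)) : img 1 R = R := by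
  simp [img]

private lemma rigid (Ω : Type) (k : Equiv.Perm Ω)
    (h : img k {p : Ω × Ω | WellOrderingRel p.1 p.2} = {p : Ω × Ω | WellOrderingRel p.1 p.2}) :
    k = 1 := by
  have hiff : ∀ a b : Ω, WellOrderingRel a b ↔ WellOrderingRel (k a) (k b) := by
    intro a b
    constructor
    · intro hab
      have : (k a, k b) ∈ img k {p : Ω × Ω | WellOrderingRel p.1 p.2} :=
        ⟨(a, b), hab, rfl⟩
      rw [h] at this; exact this
    · intro hab
      have : (k a, k b) ∈ img k {p : Ω × Ω | WellOrderingRel p.1 p.2} := by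
        rw [h]; exact hab
      obtain ⟨⟨x, y⟩, hxy, hp⟩ := this
      have hx : k x = k a := congrArg Prod.fst hp
      have hy : k y = k b := congrArg Prod.snd hp
      rwa [k.injective hx, k.injective hy] at hxy
  by_contra hk
  have hne : {a : Ω | k a ≠ a}.Nonempty := by
    by_contra hemp
    apply hk
    ext a
    have := Set.not_nonempty_iff_eq_empty.mp hemp
    have ha : a ∉ {a : Ω | k a ≠ a} := by rw [this]; exact Set.notMem_empty a
    simpa using not_not.mp ha
  have wf : WellFounded (@WellOrderingRel Ω) := (IsWellFounded.wf)
  obtain ⟨a, ha, hmin⟩ := wf.has_min _ hne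
  rcases trichotomous_of (@WellOrderingRel Ω) (k a) a with hlt | heq | hgt
  · -- k a < a, so k (k a) = k a, contradiction with order-preserving + irrefl
    have : k (k a) = k a := not_not.mp (fun hne' => hmin _ hne' hlt)
    have h2 : WellOrderingRel (k (k a)) (k a) := (hiff (k a) a).mp hlt
    rw [this] at h2
    exact irrefl _ h2
  · exact ha heq
  · -- a < k a, so k⁻¹ a < a, minimality gives k (k⁻¹ a) = k⁻¹ a i.e. a = k⁻¹ a
    have h2 : WellOrderingRel (k⁻¹ a) a := by
      have := (hiff (k⁻¹ a) (k⁻¹ (k a))).mpr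
      simp only [Equiv.Perm.inv_def, Equiv.apply_symm_apply] at this
      have h3 := this hgt
      simpa using h3
    have h3 : k (k⁻¹ a) = k⁻¹ a := not_not.mp (fun hne' => hmin _ hne' h2)
    simp only [Equiv.Perm.inv_def, Equiv.apply_symm_apply] at h3
    apply ha
    conv_lhs => rw [h3]
    simp

theorem stmt_15 (Ω : Type) (H : Subgroup (Equiv.Perm Ω)) :
    ∃ (κ : Type) (qk : κ → ℕ) (Q : (q : κ) → (Fin (qk q) → Set (Ω × Ω)) → Prop),
      (H : Set (Equiv.Perm Ω)) =
        {g : Equiv.Perm Ω | ∀ q (R : Fin (qk q) → Set (Ω × Ω)),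
          Q q R ↔ Q q (fun j => (fun p : Ω × Ω => (g p.1, g p.2)) '' R j)} := by
  classical
  set W : Set (Ω × Ω) := {p : Ω × Ω | WellOrderingRel p.1 p.2} with hW
  refine ⟨Unit, fun _ => 1, fun _ R => ∃ h : Equiv.Perm Ω, h ∈ H ∧ R 0 = img h W, ?_⟩
  ext g
  simp only [SetLike.mem_coe, Set.mem_setOf_eq]
  constructor
  · intro hg _ R
    constructor
    · rintro ⟨h, hh, hR⟩
      exact ⟨g * h, H.mul_mem hg hh, by rw [hR]; exact (img_comp Ω g h W)⟩
    · rintro ⟨h, hh, hR⟩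
      refine ⟨g⁻¹ * h, H.mul_mem (H.inv_mem hg) hh, ?_⟩
      have : img g⁻¹ (img g (R 0)) = img g⁻¹ (img h W) := by
        rw [show img g (R 0) = img h W from hR]
      rw [img_comp, img_comp, inv_mul_cancel, img_one] at this
      exact this
  · intro hg
    have h1 : ∃ h : Equiv.Perm Ω, h ∈ H ∧ (fun _ : Fin 1 => W) 0 = img h W :=
      ⟨1, H.one_mem, (img_one Ω W).symm⟩
    have h2 := (hg () (fun _ => W)).mp h1
    obtain ⟨h, hh, hR⟩ := h2
    have : img h⁻¹ (img g W) = img h⁻¹ (img h W) := by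
      rw [show img g W = img h W from hR]
    rw [img_comp, img_comp, inv_mul_cancel, img_one] at this
    have := rigid Ω (h⁻¹ * g) this
    have hg1 : g = h := by
      have : h⁻¹ * g = 1 := this
      rwa [inv_mul_eq_one, eq_comm] at this
    rw [hg1]; exact hh
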